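/- Computing the number of maximal flat intervals of w = u − v and returning |F_w| − 2 gives a factor-2 approximation for dist_any(u,v) when u and v are distinct CNPs with no null positions: (|F_w| − 1)/2 ≤ dist_any(u,v) ≤ |F_w| − 2, hence |F_w| − 2 ≤ 2·dist_any(u,v). -/

import Mathlib

open scoped ENat

/-- A copy-number profile of dimension `n`: positions are `Fin n` (position `i+1` in 1-based terms),
values are non-negative integers. -/
abbrev CNP (n : ℕ) := Fin n → ℕ

/-- An event `(s, t, δ)`: affects 1-based positions in `[s, t]`, changing copy numbers by `δ`. -/
abbrev Event := ℕ × ℕ × ℤ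

/-- A valid event has `1 ≤ s ≤ t ≤ n` and `δ ≠ 0`. -/
def ValidEvent (n : ℕ) (e : Event) : Prop :=
  1 ≤ e.1 ∧ e.1 ≤ e.2.1 ∧ e.2.1 ≤ n ∧ e.2.2 ≠ 0

/-- Applying event `e = (s,t,δ)` to `u` : each 1-based position `i ∈ [s,t]` with `u_i > 0`
becomes `max(u_i + δ, 0)`; other positions are unchanged. -/
def applyEvent {n : ℕ} (u : CNP n) (e : Event) : CNP n :=
  fun i => if e.1 ≤ (i : ℕ) + 1 ∧ (i : ℕ) + 1 ≤ e.2.1 ∧ 0 < u i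
    then ((u i : ℤ) + e.2.2).toNat else u i

/-- Applying a sequence of events in order. -/
def applySeq {n : ℕ} (u : CNP n) (E : List Event) : CNP n :=
  E.foldl applyEvent u

/-- Cost of applying event `e` on `u` w.r.t. cost function `f`:
the maximum of `f (u_i) δ` over affected positions `i ∈ [s,t]`. -/
noncomputable def eventCost {n : ℕ} (f : ℕ → ℤ → ℕ∞) (u : CNP n) (e : Event) : ℕ∞ :=
  (Finset.univ.filter (fun i : Fin n => e.1 ≤ (i : ℕ) + 1 ∧ (i : ℕ) + 1 ≤ e.2.1)).sup
    (fun i => f (u i) e.2.2)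

/-- Total cost of applying a sequence of events, costs evaluated on successive profiles. -/
noncomputable def seqCost {n : ℕ} (f : ℕ → ℤ → ℕ∞) : CNP n → List Event → ℕ∞
  | _, [] => 0
  | u, e :: E => eventCost f u e + seqCost f (applyEvent u e) E

/-- `dist_f(u,v)`: minimum total cost of a sequence of valid events transforming `u` into `v`
(`⊤` if no such sequence exists). -/
noncomputable def distf {n : ℕ} (f : ℕ → ℤ → ℕ∞) (u v : CNP n) : ℕ∞ :=
  sInf { c | ∃ E : List Event, (∀ e ∈ E, ValidEvent n e) ∧ applySeq u E = v ∧ seqCost f u E = c }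

/-- A unit-cost function takes only values `1` and `∞`. -/
def UnitCost (f : ℕ → ℤ → ℕ∞) : Prop := ∀ c δ, f c δ = 1 ∨ f c δ = ⊤

/-- The most permissive cost function: every event costs `1`. -/
def anyCost : ℕ → ℤ → ℕ∞ := fun _ _ => 1

/-- `dist_any(u,v)`: minimum number of events transforming `u` into `v`. -/
noncomputable def distAny {n : ℕ} (u v : CNP n) : ℕ∞ := distf anyCost u v

/-- The difference vector `w = u - v` in 1-based indexing, extended by `w_0 = w_{n+1} = 0`. -/
def diffExt {n : ℕ} (u v : CNP n) (i : ℕ) : ℤ :=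
  if h : 1 ≤ i ∧ i ≤ n then (u ⟨i - 1, by omega⟩ : ℤ) - (v ⟨i - 1, by omega⟩ : ℤ) else 0

/-- `[a,b] ⊆ [0, n+1]` is a flat interval of `w` if `w` is constant on it. -/
def IsFlat (n : ℕ) (w : ℕ → ℤ) (a b : ℕ) : Prop :=
  a ≤ b ∧ b ≤ n + 1 ∧ ∀ i j, a ≤ i → i ≤ b → a ≤ j → j ≤ b → w i = w j

/-- A maximal flat interval: flat, and not properly contained in a flat interval. -/
def IsMaxFlat (n : ℕ) (w : ℕ → ℤ) (a b : ℕ) : Prop :=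
  IsFlat n w a b ∧ ∀ a' b', a' ≤ a → b ≤ b' → IsFlat n w a' b' → a' = a ∧ b' = b

/-- `|F_w|`: the number of maximal flat intervals of `w` over `[0, n+1]`. -/
noncomputable def numFlat (n : ℕ) (w : ℕ → ℤ) : ℕ :=
  Nat.card {p : ℕ × ℕ // IsMaxFlat n w p.1 p.2}

/-! ### Auxiliary development -/

section Flats

variable (n : ℕ) (w : ℕ → ℤ)

/-- Starts of maximal flat intervals. -/
def startsF : Finset ℕ := (Finset.Icc 0 (n+1)).filter (fun a => a = 0 ∨ w a ≠ w (a-1))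

/-- The right endpoint of the maximal flat interval starting at `a`. -/
def runEnd (a : ℕ) : ℕ :=
  Nat.findGreatest (fun b => ∀ i ∈ Finset.Icc a b, w i = w a) (n+1)

variable {n w}

lemma runEnd_le (a : ℕ) : runEnd n w a ≤ n + 1 := Nat.findGreatest_le _

lemma le_runEnd {a : ℕ} (ha : a ≤ n + 1) : a ≤ runEnd n w a := by
  apply Nat.le_findGreatest ha
  intro i hi
  simp only [Finset.mem_Icc] at hi
  have : i = a := le_antisymm hi.2 hi.1
  rw [this]

lemma runEnd_spec {a : ℕ} : ∀ i ∈ Finset.Icc a (runEnd n w a), w i = w a := by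
  have h0 : ∀ i ∈ Finset.Icc a 0, w i = w a := by
    intro i hi
    simp only [Finset.mem_Icc] at hi
    have : i = a := by omega
    rw [this]
  exact Nat.findGreatest_spec (P := fun b => ∀ i ∈ Finset.Icc a b, w i = w a)
    (Nat.zero_le _) h0

lemma le_runEnd_of_flatTo {a b : ℕ} (hb : b ≤ n + 1)
    (h : ∀ i ∈ Finset.Icc a b, w i = w a) : b ≤ runEnd n w a :=
  Nat.le_findGreatest hb h

lemma isFlat_runEnd {a : ℕ} (ha : a ≤ n + 1) : IsFlat n w a (runEnd n w a) := by
  refine ⟨le_runEnd ha, runEnd_le a, fun i j hi hi' hj hj' => ?_⟩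
  rw [runEnd_spec i (Finset.mem_Icc.2 ⟨hi, hi'⟩), runEnd_spec j (Finset.mem_Icc.2 ⟨hj, hj'⟩)]

lemma isMaxFlat_iff {a b : ℕ} :
    IsMaxFlat n w a b ↔ a ∈ startsF n w ∧ b = runEnd n w a := by
  constructor
  · rintro ⟨hf, hmax⟩
    obtain ⟨hab, hbn, hconst⟩ := hf
    have han : a ≤ n + 1 := le_trans hab hbn
    have hstart : a = 0 ∨ w a ≠ w (a-1) := by
      by_contra hcon
      push_neg at hcon
      obtain ⟨ha0, haeq⟩ := hcon
      have ha1 : 1 ≤ a := Nat.one_le_iff_ne_zero.2 ha0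
      have hflat' : IsFlat n w (a-1) b := by
        refine ⟨by omega, hbn, fun i j hi hi' hj hj' => ?_⟩
        have key : ∀ k, a - 1 ≤ k → k ≤ b → w k = w a := by
          intro k hk hk'
          rcases Nat.lt_or_ge k a with h | h
          · have : k = a - 1 := by omega
            rw [this, ← haeq]
          · exact hconst k a h hk' le_rfl hab
        rw [key i hi hi', key j hj hj']
      have := (hmax (a-1) b (by omega) le_rfl hflat').1
      omega
    have hbe : b = runEnd n w a := by
      have hble : b ≤ runEnd n w a := by
        apply le_runEnd_of_flatTo hbn
        intro i hi
        simp only [Finset.mem_Icc] at hi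
        exact hconst i a hi.1 hi.2 le_rfl hab
      exact ((hmax a (runEnd n w a) le_rfl hble (isFlat_runEnd han)).2).symm
    exact ⟨Finset.mem_filter.2 ⟨Finset.mem_Icc.2 ⟨Nat.zero_le _, han⟩, hstart⟩, hbe⟩
  · rintro ⟨hmem, rfl⟩
    obtain ⟨hicc, hstart⟩ := Finset.mem_filter.1 hmem
    have han : a ≤ n + 1 := (Finset.mem_Icc.1 hicc).2
    refine ⟨isFlat_runEnd han, fun a' b' ha' hb' hflat' => ?_⟩
    obtain ⟨hab', hbn', hconst'⟩ := hflat'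
    have haa : a' = a := by
      by_contra hne
      have ha'lt : a' < a := lt_of_le_of_ne ha' hne
      have ha1 : 1 ≤ a := by omega
      rcases hstart with h0 | hne'
      · omega
      · have h1 : w (a-1) = w a := by
          apply hconst' (a-1) a (by omega) (by
            have := le_runEnd (w := w) han; omega) (by omega)
            (le_trans (le_runEnd han) hb')
        exact hne' h1.symm
    rw [haa] at hconst' hab'
    refine ⟨haa, le_antisymm ?_ hb'⟩
    apply le_runEnd_of_flatTo hbn'
    intro i hi
    simp only [Finset.mem_Icc] at hi
    exact hconst' i a hi.1 (le_trans hi.2 le_rfl) le_rfl (le_trans (le_runEnd han) hb')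

/-- The number of maximal flat intervals equals the number of starts. -/
lemma numFlat_eq_card_startsF : numFlat n w = (startsF n w).card := by
  have e : {p : ℕ × ℕ // IsMaxFlat n w p.1 p.2} ≃ {a // a ∈ startsF n w} :=
    { toFun := fun p => ⟨p.1.1, (isMaxFlat_iff.1 p.2).1⟩
      invFun := fun a => ⟨(a.1, runEnd n w a.1), isMaxFlat_iff.2 ⟨a.2, rfl⟩⟩
      left_inv := by
        rintro ⟨⟨a, b⟩, hp⟩
        have h2 := (isMaxFlat_iff.1 hp).2
        exact Subtype.ext (Prod.ext rfl h2.symm)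
      right_inv := by rintro ⟨a, ha⟩; rfl }
  rw [numFlat, Nat.card_congr e, Nat.card_eq_finsetCard]

end Flats

/-- breakpoints -/
def bpF (m : ℕ) (f : ℕ → ℤ) : Finset ℕ :=
  (Finset.Icc 1 (m+1)).filter (fun p => f p ≠ f (p-1))

section Flats2
variable {n : ℕ} {w : ℕ → ℤ}

lemma startsF_eq_insert : startsF n w = insert 0 (bpF n w) := by
  ext a
  simp only [startsF, bpF, Finset.mem_insert, Finset.mem_filter, Finset.mem_Icc]
  constructor
  · rintro ⟨⟨-, h2⟩, h3 | h3⟩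
    · exact Or.inl h3
    · rcases Nat.eq_zero_or_pos a with h | h
      · exact Or.inl h
      · exact Or.inr ⟨⟨h, h2⟩, h3⟩
  · rintro (rfl | ⟨⟨h1, h2⟩, h3⟩)
    · exact ⟨⟨le_rfl.trans (Nat.zero_le _), Nat.zero_le _⟩, Or.inl rfl⟩
    · exact ⟨⟨Nat.zero_le _, h2⟩, Or.inr h3⟩

lemma card_startsF : (startsF n w).card = (bpF n w).card + 1 := by
  rw [startsF_eq_insert, Finset.card_insert_of_notMem]
  intro h
  simp only [bpF, Finset.mem_filter, Finset.mem_Icc] at h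
  omega

end Flats2

section Events

variable {n : ℕ}

lemma applySeq_zero (E : List Event) : ∀ (x : CNP n) (i : Fin n), x i = 0 →
    applySeq x E i = 0 := by
  induction E with
  | nil => intro x i h; exact h
  | cons e E ih =>
    intro x i h
    have : applyEvent x e i = 0 := by simp [applyEvent, h]
    exact ih (applyEvent x e) i this

lemma pos_of_applySeq {x v : CNP n} (E : List Event) (hxv : applySeq x E = v)
    (hv : ∀ i, 0 < v i) (i : Fin n) : 0 < x i := by
  by_contra h
  have hx0 : x i = 0 := by omega
  have h2 := applySeq_zero E x i hx0
  rw [hxv] at h2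
  have := hv i
  omega

lemma eventCost_anyCost {x : CNP n} {e : Event} (he : ValidEvent n e) :
    eventCost anyCost x e = 1 := by
  obtain ⟨h1, h2, h3, _⟩ := he
  have hne : (Finset.univ.filter
      (fun i : Fin n => e.1 ≤ (i:ℕ)+1 ∧ (i:ℕ)+1 ≤ e.2.1)).Nonempty := by
    refine ⟨⟨e.1 - 1, by omega⟩, ?_⟩
    simp only [Finset.mem_filter, Finset.mem_univ, true_and]
    omega
  rw [eventCost]
  simp only [anyCost]
  exact Finset.sup_const hne 1

lemma seqCost_anyCost : ∀ (E : List Event) (x : CNP n), (∀ e ∈ E, ValidEvent n e) →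
    seqCost anyCost x E = E.length := by
  intro E
  induction E with
  | nil => intro x _; rfl
  | cons e E ih =>
    intro x h
    rw [seqCost, eventCost_anyCost (h e (List.mem_cons_self)),
      ih _ (fun e' he' => h e' (List.mem_cons_of_mem _ he')), List.length_cons]
    push_cast
    ring

lemma diffExt_self (v : CNP n) (q : ℕ) : diffExt v v q = 0 := by
  unfold diffExt; split <;> simp

lemma diffExt_pos {x v : CNP n} {q : ℕ} (h1 : 1 ≤ q) (h2 : q ≤ n) :
    diffExt x v q = (x ⟨q-1, by omega⟩ : ℤ) - v ⟨q-1, by omega⟩ := dif_pos ⟨h1, h2⟩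

lemma diffExt_out {x v : CNP n} {q : ℕ} (h : q = 0 ∨ n < q) : diffExt x v q = 0 :=
  dif_neg (by omega)

lemma step_diff {x v : CNP n} {e : Event} (he : ValidEvent n e) (hx : ∀ i, 0 < x i)
    (hx' : ∀ i, 0 < applyEvent x e i) (q : ℕ) :
    diffExt (applyEvent x e) v q
      = diffExt x v q + (if e.1 ≤ q ∧ q ≤ e.2.1 then e.2.2 else 0) := by
  obtain ⟨h1, h2, h3, h4⟩ := he
  by_cases hq : 1 ≤ q ∧ q ≤ n
  · rw [diffExt_pos hq.1 hq.2, diffExt_pos hq.1 hq.2]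
    set i : Fin n := ⟨q-1, by omega⟩ with hidef
    have hiq : (i:ℕ) + 1 = q := by simp [hidef]; omega
    by_cases hr : e.1 ≤ q ∧ q ≤ e.2.1
    · rw [if_pos hr]
      have happ : applyEvent x e i = ((x i : ℤ) + e.2.2).toNat := by
        rw [applyEvent, if_pos ⟨by omega, by omega, hx i⟩]
      have hpos : 0 < applyEvent x e i := hx' i
      rw [happ] at hpos ⊢
      have : 0 < (x i : ℤ) + e.2.2 := by
        by_contra hc
        push_neg at hc
        rw [Int.toNat_of_nonpos hc] at hpos
        omega
      rw [Int.toNat_of_nonneg (le_of_lt this)]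
      ring
    · rw [if_neg hr, add_zero]
      have happ : applyEvent x e i = x i := by
        rw [applyEvent, if_neg (by omega)]
      rw [happ]
  · have hq' : q = 0 ∨ n < q := by omega
    rw [diffExt_out hq', diffExt_out hq', if_neg (by omega), add_zero]

lemma bp_subset {x v : CNP n} {e : Event} (he : ValidEvent n e) (hx : ∀ i, 0 < x i)
    (hx' : ∀ i, 0 < applyEvent x e i) :
    bpF n (diffExt x v)
      ⊆ insert e.1 (insert (e.2.1+1) (bpF n (diffExt (applyEvent x e) v))) := by
  intro p hp
  simp only [bpF, Finset.mem_filter, Finset.mem_Icc] at hp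
  obtain ⟨⟨hp1, hpn⟩, hne⟩ := hp
  simp only [Finset.mem_insert, bpF, Finset.mem_filter, Finset.mem_Icc]
  by_cases hs : p = e.1
  · exact Or.inl hs
  by_cases ht : p = e.2.1 + 1
  · exact Or.inr (Or.inl ht)
  refine Or.inr (Or.inr ⟨⟨hp1, hpn⟩, ?_⟩)
  intro heq
  apply hne
  have hd := step_diff (v := v) he hx hx' p
  have hd' := step_diff (v := v) he hx hx' (p-1)
  have hind : (if e.1 ≤ p ∧ p ≤ e.2.1 then e.2.2 else 0)
      = (if e.1 ≤ p-1 ∧ p-1 ≤ e.2.1 then e.2.2 else 0) := by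
    obtain ⟨h1, h2, h3, h4⟩ := he
    by_cases h : e.1 ≤ p ∧ p ≤ e.2.1
    · rw [if_pos h, if_pos (by omega)]
    · rw [if_neg h, if_neg (by omega)]
  rw [hd, hd', hind] at heq
  exact add_right_cancel heq

lemma bp_card_step {x v : CNP n} {e : Event} (he : ValidEvent n e) (hx : ∀ i, 0 < x i)
    (hx' : ∀ i, 0 < applyEvent x e i) :
    (bpF n (diffExt x v)).card ≤ (bpF n (diffExt (applyEvent x e) v)).card + 2 := by
  have h1 := Finset.card_le_card (bp_subset (v := v) he hx hx')
  have h2 := Finset.card_insert_le e.1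
    (insert (e.2.1+1) (bpF n (diffExt (applyEvent x e) v)))
  have h3 := Finset.card_insert_le (e.2.1+1) (bpF n (diffExt (applyEvent x e) v))
  omega

lemma bp_le_twice {v : CNP n} (hv : ∀ i, 0 < v i) :
    ∀ (E : List Event) (x : CNP n), (∀ e ∈ E, ValidEvent n e) → applySeq x E = v →
    (bpF n (diffExt x v)).card ≤ 2 * E.length := by
  intro E
  induction E with
  | nil =>
    intro x _ hx
    have hxv : x = v := hx
    subst hxv
    have hempty : bpF n (diffExt x x) = ∅ := by
      ext p
      simp [bpF, diffExt_self]
    simp [hempty]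
  | cons e E ih =>
    intro x hval hx
    have hx' : applySeq (applyEvent x e) E = v := hx
    have hxpos : ∀ i, 0 < x i := pos_of_applySeq (e :: E) hx hv
    have hx'pos : ∀ i, 0 < applyEvent x e i := pos_of_applySeq E hx' hv
    have h1 := bp_card_step (v := v) (hval e (List.mem_cons_self)) hxpos hx'pos
    have h2 := ih (applyEvent x e)
      (fun e' he' => hval e' (List.mem_cons_of_mem _ he')) hx'
    simp only [List.length_cons]
    omega

end Events

section Upper

variable {n : ℕ}

lemma applySeq_of_disjoint (v : CNP n) :
    ∀ (E : List Event) (x : CNP n),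
    E.Pairwise (fun e e' => e.2.1 < e'.1 ∨ e'.2.1 < e.1) →
    (∀ e ∈ E, ∀ i : Fin n, e.1 ≤ (i:ℕ)+1 → (i:ℕ)+1 ≤ e.2.1 →
      0 < x i ∧ (x i : ℤ) + e.2.2 = v i) →
    (∀ i : Fin n, (∀ e ∈ E, ¬(e.1 ≤ (i:ℕ)+1 ∧ (i:ℕ)+1 ≤ e.2.1)) → x i = v i) →
    applySeq x E = v := by
  intro E
  induction E with
  | nil =>
    intro x _ _ h3
    funext i
    exact h3 i (by simp)
  | cons e E ih =>
    intro x hpw h2 h3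
    have hpw' := List.pairwise_cons.1 hpw
    have hcov : ∀ i : Fin n, e.1 ≤ (i:ℕ)+1 → (i:ℕ)+1 ≤ e.2.1 → applyEvent x e i = v i := by
      intro i hi1 hi2
      obtain ⟨hpos, heq⟩ := h2 e (List.mem_cons_self) i hi1 hi2
      simp only [applyEvent]
      rw [if_pos ⟨hi1, hi2, hpos⟩, heq]
      exact Int.toNat_natCast _
    have hout : ∀ i : Fin n, ¬(e.1 ≤ (i:ℕ)+1 ∧ (i:ℕ)+1 ≤ e.2.1) →
        applyEvent x e i = x i := by
      intro i hi
      simp only [applyEvent]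
      rw [if_neg (by tauto)]
    show applySeq (applyEvent x e) E = v
    apply ih (applyEvent x e) hpw'.2
    · intro e' he' i hi1 hi2
      have hdisj := hpw'.1 e' he'
      have hne : ¬(e.1 ≤ (i:ℕ)+1 ∧ (i:ℕ)+1 ≤ e.2.1) := by
        rcases hdisj with h | h <;> omega
      rw [hout i hne]
      exact h2 e' (List.mem_cons_of_mem _ he') i hi1 hi2
    · intro i hi
      by_cases hc : e.1 ≤ (i:ℕ)+1 ∧ (i:ℕ)+1 ≤ e.2.1
      · exact hcov i hc.1 hc.2
      · rw [hout i hc]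
        apply h3 i
        intro e' he'
        rcases List.mem_cons.1 he' with rfl | hmem
        · exact hc
        · exact hi e' hmem

lemma cover_exists {u v : CNP n} {p : ℕ} (hp1 : 1 ≤ p) (hpn : p ≤ n)
    (hw : diffExt u v p ≠ 0) :
    ∃ a ∈ startsF n (diffExt u v), diffExt u v a ≠ 0 ∧ a ≤ p ∧
      p ≤ runEnd n (diffExt u v) a := by
  set w := diffExt u v with hwdef
  have h0 : w 0 = 0 := diffExt_out (Or.inl rfl)
  set a := Nat.findGreatest (fun j => 1 ≤ j ∧ w j ≠ w (j-1)) p with hadef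
  have hale : a ≤ p := Nat.findGreatest_le p
  have hconst : ∀ j, a ≤ j → j ≤ p → w j = w a := by
    intro j
    induction j with
    | zero =>
      intro hj _
      have haz : a = 0 := by omega
      rw [haz]
    | succ k ihk =>
      intro hj hj'
      rcases eq_or_lt_of_le hj with heq | hlt
      · rw [← heq]
      · have hnp : ¬(1 ≤ k+1 ∧ w (k+1) ≠ w (k+1-1)) :=
          Nat.findGreatest_is_greatest hlt hj'
        push_neg at hnp
        have heqk : w (k+1) = w k := by simpa using hnp (by omega)
        rw [heqk]
        exact ihk (by omega) (by omega)
  have hwa : w a = w p := (hconst p hale le_rfl).symm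
  have hwa0 : w a ≠ 0 := by rw [hwa]; exact hw
  have ha1 : 1 ≤ a := by
    by_contra h
    have haz : a = 0 := by omega
    rw [haz, h0] at hwa0
    exact hwa0 rfl
  have hPa : 1 ≤ a ∧ w a ≠ w (a-1) :=
    Nat.findGreatest_of_ne_zero hadef.symm (by omega)
  refine ⟨a, ?_, hwa0, hale, ?_⟩
  · exact Finset.mem_filter.2 ⟨Finset.mem_Icc.2 ⟨Nat.zero_le _, by omega⟩, Or.inr hPa.2⟩
  · apply le_runEnd_of_flatTo (by omega)
    intro i hi
    simp only [Finset.mem_Icc] at hi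
    exact hconst i hi.1 hi.2

end Upper

/-- the flat-interval count gives a factor-2 approximation of `dist_any`:
for distinct CNPs with no null positions, `(|F_w| - 1)/2 ≤ dist_any(u,v) ≤ |F_w| - 2`,
hence `|F_w| - 2 ≤ 2 · dist_any(u,v)`. -/
theorem stmt7 {n : ℕ} (u v : CNP n) (huv : u ≠ v)
    (hu : ∀ i, 0 < u i) (hv : ∀ i, 0 < v i) :
    ((numFlat n (diffExt u v) - 1 : ℕ) : ℕ∞) ≤ 2 * distAny u v ∧
    distAny u v ≤ ((numFlat n (diffExt u v) - 2 : ℕ) : ℕ∞) ∧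
    ((numFlat n (diffExt u v) - 2 : ℕ) : ℕ∞) ≤ 2 * distAny u v := by
  classical
  set w := diffExt u v with hwdef
  have h0 : w 0 = 0 := diffExt_out (Or.inl rfl)
  have hn1 : w (n+1) = 0 := diffExt_out (Or.inr (Nat.lt_succ_self n))
  have hdif : ∀ i : Fin n, w ((i:ℕ)+1) = (u i : ℤ) - v i := by
    intro i
    rw [hwdef, diffExt_pos (by omega) (i.isLt)]
    simp
  set F := (startsF n w).filter (fun a => w a ≠ 0) with hF
  set E := (F.sort (· ≤ ·)).map (fun a => ((a, runEnd n w a, -(w a)) : Event)) with hE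
  have hmemF : ∀ a ∈ F, a ∈ startsF n w ∧ w a ≠ 0 := fun a ha => Finset.mem_filter.1 ha
  have hfacts : ∀ a ∈ F, 1 ≤ a ∧ a ≤ runEnd n w a ∧ runEnd n w a ≤ n := by
    intro a ha
    obtain ⟨haS, haw⟩ := hmemF a ha
    have han : a ≤ n + 1 := (Finset.mem_Icc.1 (Finset.mem_filter.1 haS).1).2
    have ha1 : 1 ≤ a := by
      rcases Nat.eq_zero_or_pos a with rfl | h
      · exact absurd h0 haw
      · exact h
    have hre : runEnd n w a ≤ n := by
      have hle := runEnd_le (n := n) (w := w) a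
      rcases eq_or_lt_of_le hle with heq | h
      · exfalso
        have := runEnd_spec (n := n) (w := w) (a := a) (n+1)
          (Finset.mem_Icc.2 ⟨han, heq.ge⟩)
        rw [hn1] at this
        exact haw this.symm
      · omega
    exact ⟨ha1, le_runEnd han, hre⟩
  have hvalid : ∀ e ∈ E, ValidEvent n e := by
    intro e he
    rw [hE, List.mem_map] at he
    obtain ⟨a, haF, rfl⟩ := he
    have haF' : a ∈ F := (Finset.mem_sort _).1 haF
    obtain ⟨h1, h2, h3⟩ := hfacts a haF'
    exact ⟨h1, h2, h3, neg_ne_zero.2 (hmemF a haF').2⟩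
  have hsorted : (F.sort (· ≤ ·)).Pairwise (· < ·) := List.sortedLT_iff_pairwise.1 (Finset.sortedLT_sort F)
  have hpw : E.Pairwise (fun e e' => e.2.1 < e'.1 ∨ e'.2.1 < e.1) := by
    rw [hE, List.pairwise_map]
    refine List.Pairwise.imp_of_mem ?_ hsorted
    intro a b ha hb hab
    left
    show runEnd n w a < b
    by_contra hcon
    push_neg at hcon
    have haF : a ∈ F := (Finset.mem_sort _).1 ha
    have hbF : b ∈ F := (Finset.mem_sort _).1 hb
    have hwb : w b = w a := runEnd_spec (n := n) (w := w) b
      (Finset.mem_Icc.2 ⟨le_of_lt hab, hcon⟩)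
    have hwb1 : w (b-1) = w a := runEnd_spec (n := n) (w := w) (b-1)
      (Finset.mem_Icc.2 ⟨by omega, by omega⟩)
    obtain ⟨hbS, -⟩ := hmemF b hbF
    rcases (Finset.mem_filter.1 hbS).2 with hb0 | hbne
    · omega
    · exact hbne (by rw [hwb, hwb1])
  have hcond2 : ∀ e ∈ E, ∀ i : Fin n, e.1 ≤ (i:ℕ)+1 → (i:ℕ)+1 ≤ e.2.1 →
      0 < u i ∧ (u i : ℤ) + e.2.2 = v i := by
    intro e he i hi1 hi2
    rw [hE, List.mem_map] at he
    obtain ⟨a, haF, rfl⟩ := he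
    refine ⟨hu i, ?_⟩
    have hwi : w ((i:ℕ)+1) = w a := runEnd_spec _ (Finset.mem_Icc.2 ⟨hi1, hi2⟩)
    have := hdif i
    rw [hwi] at this
    simp only []
    rw [this]
    ring
  have hcond3 : ∀ i : Fin n, (∀ e ∈ E, ¬(e.1 ≤ (i:ℕ)+1 ∧ (i:ℕ)+1 ≤ e.2.1)) →
      u i = v i := by
    intro i hi
    by_contra hne
    have hwne : w ((i:ℕ)+1) ≠ 0 := by
      rw [hdif i]
      intro hc
      exact hne (by exact_mod_cast sub_eq_zero.1 hc)
    obtain ⟨a, haS, haw, hale, hre⟩ := cover_exists (u := u) (v := v)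
      (by omega) (i.isLt) hwne
    apply hi ((a, runEnd n w a, -(w a)) : Event)
    · rw [hE, List.mem_map]
      exact ⟨a, (Finset.mem_sort _).2 (Finset.mem_filter.2 ⟨haS, haw⟩), rfl⟩
    · exact ⟨hale, hre⟩
  have happly : applySeq u E = v := applySeq_of_disjoint v E u hpw hcond2 hcond3
  have hlen : E.length = F.card := by
    rw [hE, List.length_map, Finset.length_sort]
  -- counting
  have hcard : F.card + 2 ≤ (startsF n w).card := by
    have hsplit : F.card + ((startsF n w).filter (fun a => ¬ w a ≠ 0)).card
        = (startsF n w).card := by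
      rw [hF]
      exact Finset.card_filter_add_card_filter_not (fun a => w a ≠ 0)
    have h2 : 2 ≤ ((startsF n w).filter (fun a => ¬ w a ≠ 0)).card := by
      obtain ⟨i₀, hi₀⟩ := Function.ne_iff.1 huv
      have hwi₀ : w ((i₀:ℕ)+1) ≠ 0 := by
        rw [hdif i₀]
        intro hc
        exact hi₀ (by exact_mod_cast sub_eq_zero.1 hc)
      have hex : ∃ k, w ((i₀:ℕ)+1+k) = 0 := by
        refine ⟨n - i₀, ?_⟩
        have hidx : (i₀:ℕ)+1+(n - (i₀:ℕ)) = n+1 := by have := i₀.isLt; omega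
        rw [hidx, hn1]
      set k := Nat.find hex with hkdef
      have hk : w ((i₀:ℕ)+1+k) = 0 := Nat.find_spec hex
      have hkpos : 0 < k := by
        rcases Nat.eq_zero_or_pos k with hz | h
        · rw [hz, Nat.add_zero] at hk; exact absurd hk hwi₀
        · exact h
      have hkmin : w ((i₀:ℕ)+1+(k-1)) ≠ 0 := Nat.find_min hex (by omega)
      have hkle : k ≤ n - (i₀:ℕ) := Nat.find_min' hex (by
        have hidx : (i₀:ℕ)+1+(n - (i₀:ℕ)) = n+1 := by have := i₀.isLt; omega
        rw [hidx, hn1])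
      set j := (i₀:ℕ)+1+k with hjdef
      have hjle : j ≤ n+1 := by have := i₀.isLt; omega
      have h0mem : 0 ∈ (startsF n w).filter (fun a => ¬ w a ≠ 0) := by
        refine Finset.mem_filter.2 ⟨Finset.mem_filter.2
          ⟨Finset.mem_Icc.2 ⟨le_rfl, Nat.zero_le _⟩, Or.inl rfl⟩, by simp [h0]⟩
      have hjmem : j ∈ (startsF n w).filter (fun a => ¬ w a ≠ 0) := by
        refine Finset.mem_filter.2 ⟨Finset.mem_filter.2
          ⟨Finset.mem_Icc.2 ⟨Nat.zero_le _, hjle⟩, Or.inr ?_⟩, not_not.2 hk⟩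
        have hj1 : j - 1 = (i₀:ℕ)+1+(k-1) := by omega
        rw [hjdef, hk, hj1]
        exact fun hcc => hkmin hcc.symm
      have hlt : 1 < ((startsF n w).filter (fun a => ¬ w a ≠ 0)).card :=
        Finset.one_lt_card.2 ⟨0, h0mem, j, hjmem, by omega⟩
      omega
    omega
  have hnum : numFlat n w = (bpF n w).card + 1 := by
    rw [numFlat_eq_card_startsF, card_startsF]
  have hda : distAny u v = sInf {c | ∃ E : List Event, (∀ e ∈ E, ValidEvent n e) ∧
      applySeq u E = v ∧ seqCost anyCost u E = c} := rfl
  have hupper : distAny u v ≤ (E.length : ℕ∞) := by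
    rw [hda]
    exact sInf_le ⟨E, hvalid, happly, seqCost_anyCost E u hvalid⟩
  set B := (bpF n w).card with hB
  have hinf : ((((B+1)/2 : ℕ)) : ℕ∞) ≤ distAny u v := by
    rw [hda]
    apply le_sInf
    rintro c ⟨E', hval', happ', hcost'⟩
    rw [← hcost', seqCost_anyCost E' u hval']
    have hbe := bp_le_twice hv E' u hval' happ'
    rw [← hwdef] at hbe
    exact Nat.cast_le.2 (by omega)
  have h2inf : ((B : ℕ) : ℕ∞) ≤ 2 * distAny u v :=
    calc ((B : ℕ) : ℕ∞) ≤ ((2*((B+1)/2) : ℕ) : ℕ∞) := Nat.cast_le.2 (by omega)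
    _ = 2 * ((((B+1)/2 : ℕ)) : ℕ∞) := by push_cast; ring
    _ ≤ 2 * distAny u v := mul_le_mul_right hinf 2
  have hcS : (startsF n w).card = (bpF n w).card + 1 := card_startsF
  refine ⟨?_, ?_, ?_⟩
  · exact le_trans (Nat.cast_le.2 (show numFlat n w - 1 ≤ B by omega)) h2inf
  · refine le_trans hupper (Nat.cast_le.2 ?_)
    rw [hlen]
    omega
  · exact le_trans (Nat.cast_le.2 (show numFlat n w - 2 ≤ B by omega)) h2inf
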